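/- Let ψ₁ be a density matrix on A ⊗ C₁ and ψ₂ a density matrix on C₂ ⊗ B, and set ψ = ψ₁ ⊗ ψ₂ on A ⊗ B ⊗ C where the helper system is C = C₁ ⊗ C₂. Then I(AC⟩B)_ψ = I(C₂⟩B)_{ψ₂} − S(AC₁)_{ψ₁} and I(A⟩BC)_ψ = I(A⟩C₁)_{ψ₁}. Consequently, if ψ₁ is pure, L(ψ) := min{I(AC⟩B)_ψ, I(A⟩BC)_ψ} = min{ I(C₂⟩B)_{ψ₂} , I(A⟩C₁)_{ψ₁} }. -/

import Mathlib

/- Tripartite quantum states as matrices on `A × B × C`; von Neumann entropy via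
eigenvalues of Hermitian matrices, with logarithms in base 2. -/

open Matrix
open scoped ComplexOrder

/-- von Neumann entropy `S(ρ) = -Tr(ρ log₂ ρ)` of a (Hermitian) matrix, computed from
its eigenvalues. -/
noncomputable def vNEntropy {n : Type*} [Fintype n] [DecidableEq n] (ρ : Matrix n n ℂ) : ℝ :=
  if h : ρ.IsHermitian then -∑ i, (h.eigenvalues i) * Real.logb 2 (h.eigenvalues i) else 0

section
variable {A B C : Type*} [Fintype A] [Fintype B] [Fintype C]
  [DecidableEq A] [DecidableEq B] [DecidableEq C]

/-- Reduced state `ψ^{AB} = Tr_C ψ`. -/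
noncomputable def redAB (ψ : Matrix (A × B × C) (A × B × C) ℂ) : Matrix (A × B) (A × B) ℂ :=
  fun p q => ∑ c, ψ (p.1, p.2, c) (q.1, q.2, c)

/-- Reduced state `ψ^{BC} = Tr_A ψ`. -/
noncomputable def redBC (ψ : Matrix (A × B × C) (A × B × C) ℂ) : Matrix (B × C) (B × C) ℂ :=
  fun p q => ∑ a, ψ (a, p.1, p.2) (a, q.1, q.2)

/-- Reduced state `ψ^{B} = Tr_{AC} ψ`. -/
noncomputable def redB (ψ : Matrix (A × B × C) (A × B × C) ℂ) : Matrix B B ℂ :=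
  fun b b' => ∑ a, ∑ c, ψ (a, b, c) (a, b', c)

/-- Coherent information `I(A⟩B)_ψ = S(B)_ψ - S(AB)_ψ`. -/
noncomputable def cohAB (ψ : Matrix (A × B × C) (A × B × C) ℂ) : ℝ :=
  vNEntropy (redB ψ) - vNEntropy (redAB ψ)

/-- Coherent information `I(AC⟩B)_ψ = S(B)_ψ - S(ABC)_ψ`. -/
noncomputable def cohACB (ψ : Matrix (A × B × C) (A × B × C) ℂ) : ℝ :=
  vNEntropy (redB ψ) - vNEntropy ψ

/-- Coherent information `I(A⟩BC)_ψ = S(BC)_ψ - S(ABC)_ψ`. -/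
noncomputable def cohABC (ψ : Matrix (A × B × C) (A × B × C) ℂ) : ℝ :=
  vNEntropy (redBC ψ) - vNEntropy ψ

/-- Coherent information `I(C⟩AB)_ψ = S(AB)_ψ - S(ABC)_ψ`. -/
noncomputable def cohCAB (ψ : Matrix (A × B × C) (A × B × C) ℂ) : ℝ :=
  vNEntropy (redAB ψ) - vNEntropy ψ

/-- `L(ψ) = min { I(AC⟩B)_ψ , I(A⟩BC)_ψ }`. -/
noncomputable def Lq (ψ : Matrix (A × B × C) (A × B × C) ℂ) : ℝ :=
  min (cohACB ψ) (cohABC ψ)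

end

section
variable {α β : Type*} [Fintype α] [Fintype β] [DecidableEq α] [DecidableEq β]

/-- Partial trace over the left factor of a bipartite state on `α ⊗ β`. -/
noncomputable def trLeft (ρ : Matrix (α × β) (α × β) ℂ) : Matrix β β ℂ :=
  fun b b' => ∑ a, ρ (a, b) (a, b')

/-- Partial trace over the right factor of a bipartite state on `α ⊗ β`. -/
noncomputable def trRight (ρ : Matrix (α × β) (α × β) ℂ) : Matrix α α ℂ :=
  fun a a' => ∑ b, ρ (a, b) (a', b)

end

section AuxEntropy

open Polynomial
open scoped Kronecker

variable {m n N : Type*} [Fintype m] [DecidableEq m] [Fintype n] [DecidableEq n]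
  [Fintype N] [DecidableEq N]

lemma aux_charpoly_diagonal (d : m → ℂ) :
    (Matrix.diagonal d).charpoly = ∏ i, (X - C (d i)) := by
  have h : charmatrix (Matrix.diagonal d)
      = Matrix.diagonal fun i => (X : ℂ[X]) - C (d i) := by
    ext i j
    by_cases hij : i = j
    · subst hij; simp [charmatrix_apply_eq]
    · simp [charmatrix_apply_ne _ _ _ hij, Matrix.diagonal_apply_ne _ hij]
  rw [Matrix.charpoly, h, Matrix.det_diagonal]

lemma aux_charpoly_unitary_conj (U : Matrix.unitaryGroup m ℂ) (D : Matrix m m ℂ) :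
    ((U : Matrix m m ℂ) * D * star (U : Matrix m m ℂ)).charpoly = D.charpoly := by
  have hUU : (U : Matrix m m ℂ) * star (U : Matrix m m ℂ) = 1 :=
    Matrix.mem_unitaryGroup_iff.mp U.2
  have hUU' : star (U : Matrix m m ℂ) * (U : Matrix m m ℂ) = 1 :=
    Matrix.mem_unitaryGroup_iff'.mp U.2
  set f := ((C : ℂ →+* ℂ[X]).mapMatrix : Matrix m m ℂ →+* Matrix m m ℂ[X]) with hf
  have key : charmatrix ((U : Matrix m m ℂ) * D * star (U : Matrix m m ℂ))
      = f (U : Matrix m m ℂ) * charmatrix D * f (star (U : Matrix m m ℂ)) := by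
    rw [charmatrix, charmatrix, mul_sub, sub_mul]
    congr 1
    · rw [← (Matrix.scalar_commute (X : ℂ[X]) (Commute.all _) _).eq, mul_assoc,
        ← _root_.map_mul, hUU, _root_.map_one, mul_one]
    · rw [_root_.map_mul, _root_.map_mul]
  have hdet : (f (U : Matrix m m ℂ)).det * (f (star (U : Matrix m m ℂ))).det = 1 := by
    rw [← Matrix.det_mul, ← _root_.map_mul f, hUU, _root_.map_one, Matrix.det_one]
  unfold Matrix.charpoly
  rw [key, Matrix.det_mul, Matrix.det_mul, mul_right_comm, hdet, one_mul]

lemma aux_ofReal_comp : (RCLike.ofReal : ℝ → ℂ) = Complex.ofReal := rfl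

lemma aux_prod_eq_multiset {k : Type*} [Fintype k] (g : k → ℂ) :
    (∏ i, (X - C (g i)))
      = ((Finset.univ.val.map g).map fun a => X - C a).prod := by
  rw [Multiset.map_map]
  rfl

lemma aux_sum_eq_multiset {k : Type*} [Fintype k] (g : k → ℝ) :
    (∑ i, g i * Real.logb 2 (g i))
      = ((Finset.univ.val.map fun i => ((g i : ℝ) : ℂ)).map
          fun z => z.re * Real.logb 2 z.re).sum := by
  rw [Multiset.map_map]
  simp only [Function.comp, Complex.ofReal_re]
  rfl

lemma aux_charpoly_isHermitian {ρ : Matrix m m ℂ} (h : ρ.IsHermitian) :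
    ρ.charpoly = ∏ i, (X - C ((h.eigenvalues i : ℝ) : ℂ)) := by
  conv_lhs => rw [h.spectral_theorem, Unitary.conjStarAlgAut_apply]
  rw [aux_charpoly_unitary_conj, aux_charpoly_diagonal]
  rfl

lemma aux_eig_multiset {ρ : Matrix m m ℂ} (h : ρ.IsHermitian) (d : n → ℝ)
    (hc : ρ.charpoly = ∏ i, (X - C ((d i : ℝ) : ℂ))) :
    (Finset.univ.val.map fun i => ((h.eigenvalues i : ℝ) : ℂ))
      = Finset.univ.val.map fun i => ((d i : ℝ) : ℂ) := by
  have h1 := aux_charpoly_isHermitian h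
  rw [hc] at h1
  rw [aux_prod_eq_multiset, aux_prod_eq_multiset] at h1
  have h2 := congrArg Polynomial.roots h1
  rw [Polynomial.roots_multiset_prod_X_sub_C, Polynomial.roots_multiset_prod_X_sub_C] at h2
  exact h2.symm

lemma aux_vNEntropy_eq_of_charpoly {ρ : Matrix m m ℂ} (h : ρ.IsHermitian) (d : n → ℝ)
    (hc : ρ.charpoly = ∏ i, (X - C ((d i : ℝ) : ℂ))) :
    vNEntropy ρ = -∑ i, d i * Real.logb 2 (d i) := by
  have hm := aux_eig_multiset h d hc
  rw [vNEntropy, dif_pos h]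
  congr 1
  rw [aux_sum_eq_multiset, aux_sum_eq_multiset, hm]

lemma aux_isHermitian_kron {ρ₁ : Matrix m m ℂ} {ρ₂ : Matrix n n ℂ}
    (h₁ : ρ₁.IsHermitian) (h₂ : ρ₂.IsHermitian) : (ρ₁ ⊗ₖ ρ₂).IsHermitian := by
  ext p q
  obtain ⟨i, j⟩ := p
  obtain ⟨k, l⟩ := q
  rw [Matrix.conjTranspose_apply, Matrix.kroneckerMap_apply, Matrix.kroneckerMap_apply,
    star_mul', ← Matrix.conjTranspose_apply ρ₁, ← Matrix.conjTranspose_apply ρ₂, h₁, h₂,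
    mul_comm]

lemma aux_sum_eigenvalues_eq_one {ρ : Matrix m m ℂ} (h : ρ.IsHermitian) (ht : ρ.trace = 1) :
    ∑ i, h.eigenvalues i = 1 := by
  have h1 : ρ.trace = ∑ i, (h.eigenvalues i : ℂ) := by
    conv_lhs => rw [h.spectral_theorem, Unitary.conjStarAlgAut_apply]
    rw [Matrix.trace_mul_cycle, Matrix.mem_unitaryGroup_iff'.mp h.eigenvectorUnitary.2,
      one_mul, Matrix.trace_diagonal]
    rfl
  rw [ht] at h1
  exact_mod_cast h1.symm

lemma aux_vNEntropy_kron {ρ₁ : Matrix m m ℂ} {ρ₂ : Matrix n n ℂ}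
    (h₁ : ρ₁.IsHermitian) (h₂ : ρ₂.IsHermitian)
    (t₁ : ρ₁.trace = 1) (t₂ : ρ₂.trace = 1)
    (ψ : Matrix N N ℂ) (e : N ≃ m × n) (hψ : ψ = (ρ₁ ⊗ₖ ρ₂).submatrix e e) :
    vNEntropy ψ = vNEntropy ρ₁ + vNEntropy ρ₂ := by
  have hk : (ρ₁ ⊗ₖ ρ₂).IsHermitian := aux_isHermitian_kron h₁ h₂
  have hH : ψ.IsHermitian := by rw [hψ]; exact hk.submatrix e
  set U₁ := (h₁.eigenvectorUnitary : Matrix m m ℂ) with hU₁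
  set U₂ := (h₂.eigenvectorUnitary : Matrix n n ℂ) with hU₂
  have hstar : star (U₁ ⊗ₖ U₂) = star U₁ ⊗ₖ star U₂ := by
    ext p q
    obtain ⟨i, j⟩ := p
    obtain ⟨k, l⟩ := q
    rw [Matrix.star_eq_conjTranspose, Matrix.conjTranspose_apply, Matrix.kroneckerMap_apply,
      Matrix.kroneckerMap_apply, star_mul']
    rw [Matrix.star_eq_conjTranspose, Matrix.star_eq_conjTranspose,
      Matrix.conjTranspose_apply, Matrix.conjTranspose_apply, mul_comm]
  have hmem : U₁ ⊗ₖ U₂ ∈ Matrix.unitaryGroup (m × n) ℂ := by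
    rw [Matrix.mem_unitaryGroup_iff, hstar, ← Matrix.mul_kronecker_mul,
      Matrix.mem_unitaryGroup_iff.mp h₁.eigenvectorUnitary.2,
      Matrix.mem_unitaryGroup_iff.mp h₂.eigenvectorUnitary.2,
      Matrix.one_kronecker_one]
  have hdiag : ρ₁ ⊗ₖ ρ₂
      = (U₁ ⊗ₖ U₂)
        * Matrix.diagonal (fun i : m × n =>
            ((h₁.eigenvalues i.1 * h₂.eigenvalues i.2 : ℝ) : ℂ))
        * star (U₁ ⊗ₖ U₂) := by
    conv_lhs => rw [h₁.spectral_theorem, h₂.spectral_theorem, Unitary.conjStarAlgAut_apply,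
      Unitary.conjStarAlgAut_apply]
    rw [Matrix.mul_kronecker_mul, Matrix.mul_kronecker_mul, hstar, ← hU₁, ← hU₂]
    congr 1
    congr 1
    rw [Matrix.diagonal_kronecker_diagonal]
    congr 1
    funext i
    simp [aux_ofReal_comp]
  have hcp : ψ.charpoly
      = ∏ i : m × n, (X - C (((h₁.eigenvalues i.1 * h₂.eigenvalues i.2 : ℝ)) : ℂ)) := by
    have hre : ψ = Matrix.reindex e.symm e.symm (ρ₁ ⊗ₖ ρ₂) := hψ
    rw [hre, Matrix.charpoly_reindex, hdiag,
      aux_charpoly_unitary_conj ⟨U₁ ⊗ₖ U₂, hmem⟩, aux_charpoly_diagonal]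
  rw [aux_vNEntropy_eq_of_charpoly hH _ hcp, vNEntropy, dif_pos h₁, vNEntropy, dif_pos h₂]
  have s₁ : ∑ i, h₁.eigenvalues i = 1 := aux_sum_eigenvalues_eq_one h₁ t₁
  have s₂ : ∑ i, h₂.eigenvalues i = 1 := aux_sum_eigenvalues_eq_one h₂ t₂
  have hpt : ∀ (i : m) (j : n),
      (h₁.eigenvalues i * h₂.eigenvalues j)
          * Real.logb 2 (h₁.eigenvalues i * h₂.eigenvalues j)
        = (h₁.eigenvalues i * Real.logb 2 (h₁.eigenvalues i)) * h₂.eigenvalues j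
          + h₁.eigenvalues i * (h₂.eigenvalues j * Real.logb 2 (h₂.eigenvalues j)) := by
    intro i j
    rcases eq_or_ne (h₁.eigenvalues i) 0 with hz | hz
    · simp [hz]
    rcases eq_or_ne (h₂.eigenvalues j) 0 with hz2 | hz2
    · simp [hz2]
    rw [Real.logb, Real.logb, Real.logb, Real.log_mul hz hz2]
    ring
  have expand : (∑ p : m × n,
        (h₁.eigenvalues p.1 * h₂.eigenvalues p.2)
          * Real.logb 2 (h₁.eigenvalues p.1 * h₂.eigenvalues p.2))
      = (∑ i, h₁.eigenvalues i * Real.logb 2 (h₁.eigenvalues i)) * (∑ j, h₂.eigenvalues j)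
        + (∑ i, h₁.eigenvalues i)
          * (∑ j, h₂.eigenvalues j * Real.logb 2 (h₂.eigenvalues j)) := by
    rw [Finset.sum_mul_sum, Finset.sum_mul_sum, ← Finset.sum_add_distrib,
      Fintype.sum_prod_type]
    refine Finset.sum_congr rfl fun i _ => ?_
    rw [← Finset.sum_add_distrib]
    exact Finset.sum_congr rfl fun j _ => hpt i j
  rw [expand, s₁, s₂, mul_one, one_mul]
  ring

lemma aux_vNEntropy_pure {ρ : Matrix m m ℂ} (h : ρ.IsHermitian) (hidem : ρ * ρ = ρ) :
    vNEntropy ρ = 0 := by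
  set U := (h.eigenvectorUnitary : Matrix m m ℂ) with hU
  set D := Matrix.diagonal ((RCLike.ofReal : ℝ → ℂ) ∘ h.eigenvalues) with hD
  have hU1 : U * star U = 1 := Matrix.mem_unitaryGroup_iff.mp h.eigenvectorUnitary.2
  have hDeq : star U * ρ * U = D := by
    have := h.conjStarAlgAut_star_eigenvectorUnitary
    rw [Unitary.conjStarAlgAut_star_apply] at this
    exact this
  have hDD : D * D = D := by
    rw [← hDeq]
    calc (star U * ρ * U) * (star U * ρ * U)
        = star U * ρ * (U * star U) * ρ * U := by noncomm_ring
      _ = star U * (ρ * ρ) * U := by rw [hU1]; noncomm_ring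
      _ = star U * ρ * U := by rw [hidem]
  rw [hD, Matrix.diagonal_mul_diagonal] at hDD
  have hev : ∀ i, h.eigenvalues i = 0 ∨ h.eigenvalues i = 1 := by
    intro i
    have hi := congrFun (congrFun hDD i) i
    rw [Matrix.diagonal_apply_eq, Matrix.diagonal_apply_eq] at hi
    have hi' : (h.eigenvalues i : ℂ) * (h.eigenvalues i : ℂ) = (h.eigenvalues i : ℂ) := hi
    have hr : h.eigenvalues i * h.eigenvalues i = h.eigenvalues i := by exact_mod_cast hi'
    have hfac : h.eigenvalues i * (h.eigenvalues i - 1) = 0 := by ring_nf; linarith [hr]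
    rcases mul_eq_zero.mp hfac with h0 | h0
    · exact Or.inl h0
    · exact Or.inr (by linarith)
  rw [vNEntropy, dif_pos h, Finset.sum_eq_zero, neg_zero]
  intro i _
  rcases hev i with h0 | h0 <;> simp [h0]

end AuxEntropy

section AuxTrLeft

variable {α β : Type*} [Fintype α] [Fintype β] [DecidableEq α] [DecidableEq β]

lemma aux_trLeft_isHermitian {ρ : Matrix (α × β) (α × β) ℂ} (h : ρ.IsHermitian) :
    (trLeft ρ).IsHermitian := by
  ext b b'
  rw [Matrix.conjTranspose_apply]
  show star (∑ a, ρ (a, b') (a, b)) = ∑ a, ρ (a, b) (a, b')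
  rw [star_sum]
  refine Finset.sum_congr rfl fun a _ => ?_
  rw [← Matrix.conjTranspose_apply, h]

lemma aux_trLeft_trace {ρ : Matrix (α × β) (α × β) ℂ} : (trLeft ρ).trace = ρ.trace := by
  rw [Matrix.trace, Matrix.trace]
  show (∑ b, ∑ a, ρ (a, b) (a, b)) = ∑ p : α × β, ρ p p
  rw [Fintype.sum_prod_type]
  exact Finset.sum_comm

lemma aux_pure_idem {v : α → ℂ} (hv : ∑ x, ‖v x‖ ^ 2 = 1) :
    Matrix.vecMulVec v (star v) * Matrix.vecMulVec v (star v)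
      = Matrix.vecMulVec v (star v) := by
  have hsum : (∑ k, star (v k) * v k) = 1 := by
    have h1 : ∀ k, star (v k) * v k = ((‖v k‖ ^ 2 : ℝ) : ℂ) := by
      intro k
      have := RCLike.conj_mul (v k)
      rw [RCLike.star_def, this]
      norm_cast
    simp_rw [h1]
    rw [← Complex.ofReal_sum]
    exact_mod_cast hv
  ext i j
  rw [Matrix.mul_apply]
  simp only [Matrix.vecMulVec_apply, Pi.star_apply]
  calc (∑ k, v i * star (v k) * (v k * star (v j)))
      = (v i * star (v j)) * ∑ k, star (v k) * v k := by
        rw [Finset.mul_sum]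
        exact Finset.sum_congr rfl fun k _ => by ring
    _ = v i * star (v j) := by rw [hsum, mul_one]

end AuxTrLeft

section
variable {A B C₁ C₂ : Type*} [Fintype A] [Fintype B] [Fintype C₁] [Fintype C₂]
  [DecidableEq A] [DecidableEq B] [DecidableEq C₁] [DecidableEq C₂]

/-- The tensor product `ψ₁ ⊗ ψ₂` of `ψ₁` on `A ⊗ C₁` and `ψ₂` on `C₂ ⊗ B`, regarded as a
state on `A ⊗ B ⊗ C` with helper system `C = C₁ ⊗ C₂`. -/
noncomputable def prodState (ψ₁ : Matrix (A × C₁) (A × C₁) ℂ)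
    (ψ₂ : Matrix (C₂ × B) (C₂ × B) ℂ) :
    Matrix (A × B × C₁ × C₂) (A × B × C₁ × C₂) ℂ :=
  fun p q => ψ₁ (p.1, p.2.2.1) (q.1, q.2.2.1) * ψ₂ (p.2.2.2, p.2.1) (q.2.2.2, q.2.1)

/-- For `ψ = ψ₁ ⊗ ψ₂` with `ψ₁` on `A ⊗ C₁` and `ψ₂` on `C₂ ⊗ B` (helper `C = C₁ ⊗ C₂`):
`I(AC⟩B)_ψ = I(C₂⟩B)_{ψ₂} - S(AC₁)_{ψ₁}` and `I(A⟩BC)_ψ = I(A⟩C₁)_{ψ₁}`.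
Consequently, if `ψ₁` is pure then
`L(ψ) = min { I(C₂⟩B)_{ψ₂} , I(A⟩C₁)_{ψ₁} }`. -/
theorem L_of_product (ψ₁ : Matrix (A × C₁) (A × C₁) ℂ) (ψ₂ : Matrix (C₂ × B) (C₂ × B) ℂ)
    (h₁ : ψ₁.PosSemidef) (h₁tr : ψ₁.trace = 1)
    (h₂ : ψ₂.PosSemidef) (h₂tr : ψ₂.trace = 1) :
    cohACB (prodState ψ₁ ψ₂)
        = (vNEntropy (trLeft ψ₂) - vNEntropy ψ₂) - vNEntropy ψ₁ ∧
    cohABC (prodState ψ₁ ψ₂)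
        = vNEntropy (trLeft ψ₁) - vNEntropy ψ₁ ∧
    (∀ v : A × C₁ → ℂ, (∑ x, ‖v x‖ ^ 2 = 1) → ψ₁ = Matrix.vecMulVec v (star v) →
      Lq (prodState ψ₁ ψ₂)
        = min (vNEntropy (trLeft ψ₂) - vNEntropy ψ₂)
            (vNEntropy (trLeft ψ₁) - vNEntropy ψ₁)) := by
  classical
  have hψ₁H : ψ₁.IsHermitian := h₁.1
  have hψ₂H : ψ₂.IsHermitian := h₂.1
  -- the product state as a reindexed Kronecker product
  let eψ : (A × B × C₁ × C₂) ≃ (A × C₁) × (C₂ × B) :=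
    ⟨fun p => ((p.1, p.2.2.1), (p.2.2.2, p.2.1)),
     fun q => (q.1.1, q.2.2, q.1.2, q.2.1), fun _ => rfl, fun _ => rfl⟩
  have hprod : prodState ψ₁ ψ₂ = (Matrix.kroneckerMap (· * ·) ψ₁ ψ₂).submatrix eψ eψ := rfl
  have hSψ : vNEntropy (prodState ψ₁ ψ₂) = vNEntropy ψ₁ + vNEntropy ψ₂ :=
    aux_vNEntropy_kron hψ₁H hψ₂H h₁tr h₂tr _ eψ hprod
  -- the reduced state on B
  have htr1 : (∑ p : A × C₁, ψ₁ p p) = 1 := by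
    have := h₁tr
    rw [Matrix.trace] at this
    exact this
  have hredB : redB (prodState ψ₁ ψ₂) = trLeft ψ₂ := by
    ext b b'
    show (∑ a, ∑ c : C₁ × C₂, ψ₁ (a, c.1) (a, c.1) * ψ₂ (c.2, b) (c.2, b'))
      = ∑ c₂, ψ₂ (c₂, b) (c₂, b')
    calc (∑ a, ∑ c : C₁ × C₂, ψ₁ (a, c.1) (a, c.1) * ψ₂ (c.2, b) (c.2, b'))
        = ∑ a, ∑ c₁, ∑ c₂, ψ₁ (a, c₁) (a, c₁) * ψ₂ (c₂, b) (c₂, b') := by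
          simp_rw [Fintype.sum_prod_type]
      _ = (∑ p : A × C₁, ψ₁ p p) * ∑ c₂, ψ₂ (c₂, b) (c₂, b') := by
          simp_rw [Fintype.sum_prod_type, Finset.sum_mul, Finset.mul_sum]
      _ = ∑ c₂, ψ₂ (c₂, b) (c₂, b') := by rw [htr1, one_mul]
  -- the reduced state on B C as a reindexed Kronecker product
  let eBC : (B × C₁ × C₂) ≃ (C₁ × C₂ × B) :=
    ⟨fun p => (p.2.1, p.2.2, p.1), fun q => (q.2.2, q.1, q.2.1), fun _ => rfl, fun _ => rfl⟩
  have hredBC : redBC (prodState ψ₁ ψ₂)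
      = (Matrix.kroneckerMap (· * ·) (trLeft ψ₁) ψ₂).submatrix eBC eBC := by
    ext p q
    obtain ⟨b, c₁, c₂⟩ := p
    obtain ⟨b', c₁', c₂'⟩ := q
    show (∑ a, ψ₁ (a, c₁) (a, c₁') * ψ₂ (c₂, b) (c₂', b'))
      = (∑ a, ψ₁ (a, c₁) (a, c₁')) * ψ₂ (c₂, b) (c₂', b')
    rw [Finset.sum_mul]
  have hSredBC : vNEntropy (redBC (prodState ψ₁ ψ₂))
      = vNEntropy (trLeft ψ₁) + vNEntropy ψ₂ :=
    aux_vNEntropy_kron (aux_trLeft_isHermitian hψ₁H) hψ₂H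
      (by rw [aux_trLeft_trace]; exact h₁tr) h₂tr _ eBC hredBC
  have goal1 : cohACB (prodState ψ₁ ψ₂)
      = (vNEntropy (trLeft ψ₂) - vNEntropy ψ₂) - vNEntropy ψ₁ := by
    show vNEntropy (redB (prodState ψ₁ ψ₂)) - vNEntropy (prodState ψ₁ ψ₂) = _
    rw [hredB, hSψ]
    ring
  have goal2 : cohABC (prodState ψ₁ ψ₂) = vNEntropy (trLeft ψ₁) - vNEntropy ψ₁ := by
    show vNEntropy (redBC (prodState ψ₁ ψ₂)) - vNEntropy (prodState ψ₁ ψ₂) = _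
    rw [hSredBC, hSψ]
    ring
  refine ⟨goal1, goal2, ?_⟩
  intro v hv hpure
  have hS1 : vNEntropy ψ₁ = 0 := by
    apply aux_vNEntropy_pure hψ₁H
    rw [hpure]
    exact aux_pure_idem hv
  show min (cohACB (prodState ψ₁ ψ₂)) (cohABC (prodState ψ₁ ψ₂)) = _
  rw [goal1, goal2, hS1, sub_zero, sub_zero]

end
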